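/- arXiv:2602.23144 — 2 statements merged into one kernel-verified Lean document; each statement's English description precedes it below -/
import Mathlib

section
/- Let φ: [0,∞) → ℝ be convex, superlinear at infinity, with Legendre transform ψ. For every Hermitian matrix W on a finite-dimensional Hilbert space, sup over positive semidefinite Hermitian π of (Tr[Wπ] − Tr[φ(π)]) equals Tr[ψ(W)]. -/
open scoped ComplexOrder

open Matrix Filter Topology

/-- Trace of `g` applied to a Hermitian matrix via functional calculus
(junk value `0` on non-Hermitian matrices). -/
noncomputable def traceFun {n : Type*} [Fintype n] [DecidableEq n]
    (g : ℝ → ℝ) (A : Matrix n n ℂ) : ℝ :=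
  if h : A.IsHermitian then ∑ i, g (h.eigenvalues i) else 0

/-- The Legendre transform of `φ : [0,∞) → ℝ`, i.e. `ψ t = sup_{x ≥ 0} (t x - φ x)`. -/
noncomputable def legendre (φ : ℝ → ℝ) (t : ℝ) : ℝ :=
  sSup ((fun x => t * x - φ x) '' Set.Ici 0)

section aux

open Polynomial

lemma traceFun_eq {n : Type*} [Fintype n] [DecidableEq n] (g : ℝ → ℝ)
    {A : Matrix n n ℂ} (hA : A.IsHermitian) :
    traceFun g A = ∑ i, g (hA.eigenvalues i) := by
  rw [traceFun, dif_pos hA]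

lemma charpoly_unitary_conj {n : Type*} [Fintype n] [DecidableEq n]
    (U : Matrix.unitaryGroup n ℂ) (D : Matrix n n ℂ) :
    ((U : Matrix n n ℂ) * D * star (U : Matrix n n ℂ)).charpoly = D.charpoly := by
  set m : Matrix n n ℂ →+* Matrix n n ℂ[X] := (Polynomial.C : ℂ →+* ℂ[X]).mapMatrix with hm
  have hUU : (U : Matrix n n ℂ) * star (U : Matrix n n ℂ) = 1 :=
    Matrix.mem_unitaryGroup_iff.mp U.2
  have hcm : Matrix.charmatrix ((U : Matrix n n ℂ) * D * star (U : Matrix n n ℂ))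
      = m U * Matrix.charmatrix D * m (star (U : Matrix n n ℂ)) := by
    rw [Matrix.charmatrix, Matrix.charmatrix, mul_sub, sub_mul]
    congr 1
    · rw [(Matrix.scalar_commute (X : ℂ[X]) (fun r' => Commute.all _ _) (m U)).symm.eq,
        mul_assoc, ← _root_.map_mul m, hUU, _root_.map_one m, mul_one]
    · rw [← _root_.map_mul m, ← _root_.map_mul m]
  have hdet : (m (U : Matrix n n ℂ)).det * (m (star (U : Matrix n n ℂ))).det = 1 := by
    rw [← Matrix.det_mul, ← _root_.map_mul m, hUU, _root_.map_one m, Matrix.det_one]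
  rw [Matrix.charpoly, Matrix.charpoly, hcm, Matrix.det_mul, Matrix.det_mul]
  linear_combination (Matrix.charmatrix D).det * hdet

lemma charpoly_diag_conj {n : Type*} [Fintype n] [DecidableEq n] [LinearOrder n]
    (U : Matrix.unitaryGroup n ℂ) (v : n → ℝ) :
    ((U : Matrix n n ℂ) * Matrix.diagonal (fun i => (v i : ℂ)) * star (U : Matrix n n ℂ)).charpoly
      = ∏ i, (X - C ((v i : ℂ))) := by
  rw [charpoly_unitary_conj,
    Matrix.charpoly_of_upperTriangular _ (Matrix.blockTriangular_diagonal _)]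
  simp

lemma roots_prod_X_sub_C' {n : Type*} [Fintype n] (f : n → ℂ) :
    (∏ i, (X - C (f i))).roots = Finset.univ.val.map f := by
  rw [Finset.prod_eq_multiset_prod]
  rw [show (Multiset.map (fun i => X - C (f i)) Finset.univ.val)
      = Multiset.map (fun a => X - C a) (Multiset.map f Finset.univ.val) by
    rw [Multiset.map_map]; rfl]
  rw [Polynomial.roots_multiset_prod_X_sub_C]

lemma sum_eigenvalues_conj {d : ℕ} (U : Matrix.unitaryGroup (Fin d) ℂ) (x : Fin d → ℝ)
    {A : Matrix (Fin d) (Fin d) ℂ}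
    (hAdef : A = (U : Matrix (Fin d) (Fin d) ℂ) * Matrix.diagonal (fun i => ((x i : ℂ)))
      * star (U : Matrix (Fin d) (Fin d) ℂ))
    (hA : A.IsHermitian) (g : ℝ → ℝ) :
    ∑ i, g (hA.eigenvalues i) = ∑ i, g (x i) := by
  have h1 : A.charpoly = ∏ i, (X - C ((x i : ℂ))) := by
    rw [hAdef, charpoly_diag_conj]
  have h2 : A.charpoly = ∏ i, (X - C ((hA.eigenvalues i : ℂ))) := by
    conv_lhs => rw [show A = (hA.eigenvectorUnitary : Matrix (Fin d) (Fin d) ℂ)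
      * Matrix.diagonal (fun i => ((hA.eigenvalues i : ℂ)))
      * star (hA.eigenvectorUnitary : Matrix (Fin d) (Fin d) ℂ) from hA.spectral_theorem]
    rw [charpoly_diag_conj]
  have hmul : Multiset.map (fun i => ((x i : ℂ))) Finset.univ.val
      = Multiset.map (fun i => ((hA.eigenvalues i : ℂ))) Finset.univ.val := by
    have := congrArg Polynomial.roots (h1.symm.trans h2)
    rwa [roots_prod_X_sub_C', roots_prod_X_sub_C'] at this
  have hre : Multiset.map x Finset.univ.val = Multiset.map hA.eigenvalues Finset.univ.val := by
    apply Multiset.map_injective Complex.ofReal_injective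
    rwa [Multiset.map_map, Multiset.map_map]
  calc ∑ i, g (hA.eigenvalues i)
      = (Multiset.map g (Multiset.map hA.eigenvalues Finset.univ.val)).sum := by
        rw [Multiset.map_map]; rfl
    _ = (Multiset.map g (Multiset.map x Finset.univ.val)).sum := by rw [hre]
    _ = ∑ i, g (x i) := by rw [Multiset.map_map]; rfl

lemma legendre_bddAbove (φ : ℝ → ℝ) (hconv : ConvexOn ℝ (Set.Ici 0) φ)
    (hsl : Tendsto (fun t => φ t / t) atTop atTop) (t : ℝ) :
    BddAbove ((fun x => t * x - φ x) '' Set.Ici 0) := by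
  obtain ⟨M0, hM0⟩ := (Filter.eventually_atTop).mp (hsl.eventually_ge_atTop t)
  set M : ℝ := max M0 1 with hM
  set y : ℝ := M + 1 with hy
  set z : ℝ := M + 2 with hz
  set s : ℝ := φ z - φ y with hs
  have hM1 : (1:ℝ) ≤ M := le_max_right _ _
  refine ⟨max 0 (|t| * M + |s| * (M + 1) + |φ y|), ?_⟩
  rintro r ⟨x, hx, rfl⟩
  simp only [Set.mem_Ici] at hx
  show t * x - φ x ≤ max 0 (|t| * M + |s| * (M + 1) + |φ y|)
  rcases le_or_gt x M with hxM | hxM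
  · have hxy : x < y := by simp only [hy]; linarith
    have hyz : y < z := by simp only [hy, hz]; linarith
    have hzmem : z ∈ Set.Ici (0:ℝ) := by simp only [Set.mem_Ici, hz]; linarith
    have hslope := hconv.slope_mono_adjacent hx hzmem hxy hyz
    have hzy : z - y = 1 := by simp only [hy, hz]; ring
    rw [hzy, div_one] at hslope
    have h1 : φ y - φ x ≤ s * (y - x) := by
      rw [div_le_iff₀ (by linarith)] at hslope
      simpa [hs] using hslope
    have htx : t * x ≤ |t| * M := by
      calc t * x ≤ |t| * x := mul_le_mul_of_nonneg_right (le_abs_self t) hx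
        _ ≤ |t| * M := mul_le_mul_of_nonneg_left hxM (abs_nonneg t)
    have hsyx : s * (y - x) ≤ |s| * (M + 1) := by
      calc s * (y - x) ≤ |s| * (y - x) :=
            mul_le_mul_of_nonneg_right (le_abs_self s) (by linarith)
        _ ≤ |s| * (M + 1) := by
            apply mul_le_mul_of_nonneg_left _ (abs_nonneg s)
            simp only [hy]; linarith
    have hφy : -|φ y| ≤ φ y := neg_abs_le _
    refine le_trans ?_ (le_max_right _ _)
    linarith
  · have hxM0 : M0 ≤ x := le_trans (le_trans (le_max_left _ _) hxM.le) le_rfl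
    have hx1 : (1:ℝ) ≤ x := le_trans hM1 hxM.le
    have := hM0 x hxM0
    have hxt : t * x ≤ φ x := by
      rw [le_div_iff₀ (by linarith)] at this; linarith
    refine le_trans ?_ (le_max_left _ _)
    linarith

lemma le_legendre (φ : ℝ → ℝ) (hconv : ConvexOn ℝ (Set.Ici 0) φ)
    (hsl : Tendsto (fun t => φ t / t) atTop atTop) (t x : ℝ) (hx : 0 ≤ x) :
    t * x - φ x ≤ legendre φ t :=
  le_csSup (legendre_bddAbove φ hconv hsl t) ⟨x, hx, rfl⟩

lemma legendre_exists (φ : ℝ → ℝ) (t : ℝ) {ε : ℝ} (hε : 0 < ε) :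
    ∃ x, 0 ≤ x ∧ legendre φ t - ε < t * x - φ x := by
  have hne : ((fun x => t * x - φ x) '' Set.Ici 0).Nonempty :=
    ⟨_, ⟨0, Set.mem_Ici.mpr le_rfl, rfl⟩⟩
  obtain ⟨r, ⟨x, hx, rfl⟩, hr⟩ :=
    exists_lt_of_lt_csSup hne (show legendre φ t - ε < legendre φ t by linarith)
  exact ⟨x, hx, hr⟩

lemma conj_diag_apply_re {d : ℕ} (S : Matrix (Fin d) (Fin d) ℂ) (v : Fin d → ℝ) (i : Fin d) :
    ((S * Matrix.diagonal (fun j => ((v j : ℂ))) * star S) i i).re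
      = ∑ j, Complex.normSq (S i j) * v j := by
  have h : (S * Matrix.diagonal (fun j => ((v j : ℂ))) * star S) i i
      = ∑ j, ((Complex.normSq (S i j) * v j : ℝ) : ℂ) := by
    rw [Matrix.mul_apply]
    congr 1; funext k
    rw [Matrix.mul_apply, Finset.sum_mul]
    rw [Finset.sum_eq_single k]
    · simp only [Matrix.diagonal_apply_eq, Matrix.star_apply]
      push_cast
      rw [show S i k * (v k : ℂ) * star (S i k) = (S i k * star (S i k)) * (v k : ℂ) by ring]
      rw [Complex.star_def, Complex.mul_conj]
    · intro b _ hb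
      simp [Matrix.diagonal_apply_ne _ hb]
    · simp
  rw [h]
  push_cast
  rw [Complex.re_sum]
  simp

lemma row_sum_normSq {d : ℕ} (S : Matrix (Fin d) (Fin d) ℂ)
    (hS : S * star S = 1) (i : Fin d) :
    ∑ j, Complex.normSq (S i j) = 1 := by
  have := congrArg (fun M : Matrix (Fin d) (Fin d) ℂ => (M i i).re) hS
  simp only [Matrix.mul_apply, Matrix.star_apply, Matrix.one_apply_eq] at this
  rw [Complex.re_sum] at this
  simp only [Complex.star_def, Complex.mul_conj] at this
  simpa using this

lemma col_sum_normSq {d : ℕ} (S : Matrix (Fin d) (Fin d) ℂ)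
    (hS : star S * S = 1) (j : Fin d) :
    ∑ i, Complex.normSq (S i j) = 1 := by
  have := congrArg (fun M : Matrix (Fin d) (Fin d) ℂ => (M j j).re) hS
  simp only [Matrix.mul_apply, Matrix.star_apply, Matrix.one_apply_eq] at this
  rw [Complex.re_sum] at this
  simp only [Complex.star_def] at this
  have h2 : ∀ i, (starRingEnd ℂ) (S i j) * S i j = (Complex.normSq (S i j) : ℂ) := by
    intro i; rw [mul_comm, Complex.mul_conj]
  simp only [h2] at this
  simpa using this

lemma upper_bound {d : ℕ} (φ : ℝ → ℝ) (hconv : ConvexOn ℝ (Set.Ici 0) φ)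
    (hsl : Tendsto (fun t => φ t / t) atTop atTop)
    (W : Matrix (Fin d) (Fin d) ℂ) (hW : W.IsHermitian)
    (π : Matrix (Fin d) (Fin d) ℂ) (hπ : π.PosSemidef) :
    (Matrix.trace (W * π)).re - traceFun φ π ≤ traceFun (legendre φ) W := by
  set U : Matrix (Fin d) (Fin d) ℂ := (hW.eigenvectorUnitary : Matrix (Fin d) (Fin d) ℂ) with hU
  set V : Matrix (Fin d) (Fin d) ℂ := (hπ.1.eigenvectorUnitary : Matrix (Fin d) (Fin d) ℂ) with hV
  set t : Fin d → ℝ := hW.eigenvalues with ht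
  set μ : Fin d → ℝ := hπ.1.eigenvalues with hμ
  set S : Matrix (Fin d) (Fin d) ℂ := star U * V with hS
  have hUu : U * star U = 1 := Matrix.mem_unitaryGroup_iff.mp hW.eigenvectorUnitary.2
  have hUu' : star U * U = 1 := Matrix.mem_unitaryGroup_iff'.mp hW.eigenvectorUnitary.2
  have hVu : V * star V = 1 := Matrix.mem_unitaryGroup_iff.mp hπ.1.eigenvectorUnitary.2
  have hVu' : star V * V = 1 := Matrix.mem_unitaryGroup_iff'.mp hπ.1.eigenvectorUnitary.2
  have hSu : S * star S = 1 := by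
    rw [hS, Matrix.star_mul, star_star, Matrix.mul_assoc, ← Matrix.mul_assoc V, hVu,
      Matrix.one_mul, hUu']
  have hSu' : star S * S = 1 := by
    rw [hS, Matrix.star_mul, star_star, Matrix.mul_assoc, ← Matrix.mul_assoc U, hUu,
      Matrix.one_mul, hVu']
  set p : Fin d → Fin d → ℝ := fun i j => Complex.normSq (S i j) with hp
  set q : Fin d → ℝ := fun i => ∑ j, p i j * μ j with hq
  have hp0 : ∀ i j, 0 ≤ p i j := fun i j => Complex.normSq_nonneg _
  have hμ0 : ∀ j, 0 ≤ μ j := hπ.eigenvalues_nonneg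
  have hq0 : ∀ i, 0 ≤ q i := fun i =>
    Finset.sum_nonneg fun j _ => mul_nonneg (hp0 i j) (hμ0 j)
  have hπdef : π = V * Matrix.diagonal (fun j => ((μ j : ℂ))) * star V := by
    convert hπ.1.spectral_theorem using 2
    rfl
  have hWdef : W = U * Matrix.diagonal (fun i => ((t i : ℂ))) * star U := by
    convert hW.spectral_theorem using 2
    rfl
  have hQ : star U * π * U = S * Matrix.diagonal (fun j => ((μ j : ℂ))) * star S := by
    rw [hπdef, hS]
    simp only [Matrix.star_mul, star_star, Matrix.mul_assoc]
  have htr : (Matrix.trace (W * π)).re = ∑ i, t i * q i := by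
    have h1 : Matrix.trace (W * π)
        = Matrix.trace (Matrix.diagonal (fun i => ((t i : ℂ))) * (star U * π * U)) := by
      calc Matrix.trace (W * π)
          = Matrix.trace ((U * Matrix.diagonal (fun i => ((t i : ℂ)))) * (star U * π)) := by
            rw [hWdef, Matrix.mul_assoc]
        _ = Matrix.trace ((star U * π) * (U * Matrix.diagonal (fun i => ((t i : ℂ))))) :=
            Matrix.trace_mul_comm _ _
        _ = Matrix.trace ((star U * π * U) * Matrix.diagonal (fun i => ((t i : ℂ)))) := by
            rw [Matrix.mul_assoc (star U * π) U]
        _ = Matrix.trace (Matrix.diagonal (fun i => ((t i : ℂ))) * (star U * π * U)) :=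
            Matrix.trace_mul_comm _ _
    rw [h1, hQ, Matrix.trace, Complex.re_sum]
    refine Finset.sum_congr rfl fun i _ => ?_
    show (((Matrix.diagonal fun i => ((t i : ℂ)))
        * (S * Matrix.diagonal (fun j => ((μ j : ℂ))) * star S)) i i).re = t i * q i
    rw [Matrix.diagonal_mul, Complex.mul_re]
    simp only [Complex.ofReal_re, Complex.ofReal_im, zero_mul, sub_zero]
    rw [conj_diag_apply_re]
  have hjen : ∀ i, φ (q i) ≤ ∑ j, p i j * φ (μ j) := by
    intro i
    have := hconv.map_sum_le (t := Finset.univ) (w := p i) (p := μ)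
      (fun j _ => hp0 i j) (row_sum_normSq S hSu i) (fun j _ => hμ0 j)
    simpa [hq, smul_eq_mul] using this
  have hsum : ∑ i, ∑ j, p i j * φ (μ j) = ∑ j, φ (μ j) := by
    rw [Finset.sum_comm]
    refine Finset.sum_congr rfl fun j _ => ?_
    rw [← Finset.sum_mul, col_sum_normSq S hSu' j, one_mul]
  have hφπ : traceFun φ π = ∑ j, φ (μ j) := traceFun_eq φ hπ.1
  have hψW : traceFun (legendre φ) W = ∑ i, legendre φ (t i) := traceFun_eq _ hW
  rw [htr, hφπ, hψW]
  calc ∑ i, t i * q i - ∑ j, φ (μ j)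
      = ∑ i, t i * q i - ∑ i, ∑ j, p i j * φ (μ j) := by rw [hsum]
    _ ≤ ∑ i, t i * q i - ∑ i, φ (q i) := by
        have : ∑ i, φ (q i) ≤ ∑ i, ∑ j, p i j * φ (μ j) :=
          Finset.sum_le_sum fun i _ => hjen i
        linarith
    _ = ∑ i, (t i * q i - φ (q i)) := by rw [Finset.sum_sub_distrib]
    _ ≤ ∑ i, legendre φ (t i) :=
        Finset.sum_le_sum fun i _ => le_legendre φ hconv hsl (t i) (q i) (hq0 i)

end aux

/-- `sup_{π ⪰ 0} (Tr[Wπ] - Tr[φ(π)]) = Tr[ψ(W)]` where `ψ = φ*`. -/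
theorem stmt3 {d : ℕ} (φ : ℝ → ℝ) (hconv : ConvexOn ℝ (Set.Ici 0) φ)
    (hsl : Tendsto (fun t => φ t / t) atTop atTop)
    (W : Matrix (Fin d) (Fin d) ℂ) (hW : W.IsHermitian) :
    IsLUB {r : ℝ | ∃ π : Matrix (Fin d) (Fin d) ℂ, π.PosSemidef ∧
        r = (Matrix.trace (W * π)).re - traceFun φ π}
      (traceFun (legendre φ) W) := by
  constructor
  · rintro r ⟨π, hπ, rfl⟩
    exact upper_bound φ hconv hsl W hW π hπ
  · intro b hb
    refine le_of_forall_pos_le_add fun ε hε => ?_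
    set U : Matrix (Fin d) (Fin d) ℂ := (hW.eigenvectorUnitary : Matrix (Fin d) (Fin d) ℂ)
      with hUdef
    set t : Fin d → ℝ := hW.eigenvalues with ht
    have hUu' : star U * U = 1 := Matrix.mem_unitaryGroup_iff'.mp hW.eigenvectorUnitary.2
    have hεd : 0 < ε / (d + 1) := by positivity
    choose x hx0 hxv using fun i : Fin d => legendre_exists φ (t i) hεd
    set π : Matrix (Fin d) (Fin d) ℂ :=
      U * Matrix.diagonal (fun i => ((x i : ℂ))) * star U with hπdef
    have hπPSD : π.PosSemidef := by
      have hdiag : (Matrix.diagonal (fun i => ((x i : ℂ)))).PosSemidef :=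
        Matrix.posSemidef_diagonal_iff.mpr fun i => by
          rw [Complex.zero_le_real]; exact hx0 i
      have := hdiag.mul_mul_conjTranspose_same U
      rwa [← Matrix.star_eq_conjTranspose] at this
    have hφπ : traceFun φ π = ∑ i, φ (x i) := by
      rw [traceFun_eq φ hπPSD.1]
      exact sum_eigenvalues_conj hW.eigenvectorUnitary x hπdef hπPSD.1 φ
    have hWπ : W * π = U * (Matrix.diagonal (fun i => ((t i : ℂ)))
        * Matrix.diagonal (fun i => ((x i : ℂ)))) * star U := by
      calc W * π
          = U * Matrix.diagonal (fun i => ((t i : ℂ)))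
            * ((star U * U) * (Matrix.diagonal (fun i => ((x i : ℂ))) * star U)) := by
            conv_lhs => rw [show W = U * Matrix.diagonal (fun i => ((t i : ℂ))) * star U by
              convert hW.spectral_theorem using 2; rfl]
            simp only [Matrix.mul_assoc, hπdef]
        _ = U * (Matrix.diagonal (fun i => ((t i : ℂ)))
            * Matrix.diagonal (fun i => ((x i : ℂ)))) * star U := by
            rw [hUu', Matrix.one_mul]
            simp only [Matrix.mul_assoc]
    have htr : (Matrix.trace (W * π)).re = ∑ i, t i * x i := by
      rw [hWπ, Matrix.diagonal_mul_diagonal, Matrix.trace_mul_cycle,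
        hUu', Matrix.one_mul, Matrix.trace_diagonal]
      rw [show (∑ i, ((t i : ℂ) * (x i : ℂ))) = ((∑ i, t i * x i : ℝ) : ℂ) by
        push_cast; ring]
      exact Complex.ofReal_re _
    have hmem : (∑ i, (t i * x i - φ (x i))) ∈ {r : ℝ |
        ∃ π : Matrix (Fin d) (Fin d) ℂ, π.PosSemidef ∧
          r = (Matrix.trace (W * π)).re - traceFun φ π} :=
      ⟨π, hπPSD, by rw [htr, hφπ, Finset.sum_sub_distrib]⟩
    have hle := hb hmem
    have hψW : traceFun (legendre φ) W = ∑ i, legendre φ (t i) := traceFun_eq _ hW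
    have hstep : ∑ i, legendre φ (t i)
        ≤ (∑ i, (t i * x i - φ (x i))) + (d : ℝ) * (ε / (d + 1)) := by
      have h1 : ∀ i : Fin d, legendre φ (t i) ≤ t i * x i - φ (x i) + ε / (d + 1) := by
        intro i; linarith [hxv i]
      calc ∑ i, legendre φ (t i)
          ≤ ∑ i : Fin d, (t i * x i - φ (x i) + ε / (d + 1)) :=
            Finset.sum_le_sum fun i _ => h1 i
        _ = (∑ i, (t i * x i - φ (x i))) + (d : ℝ) * (ε / (d + 1)) := by
            rw [Finset.sum_add_distrib, Finset.sum_const, Finset.card_univ, Fintype.card_fin,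
              nsmul_eq_mul]
    have hdd : (d : ℝ) * (ε / (d + 1)) ≤ ε := by
      have hpos : (0:ℝ) < (d : ℝ) + 1 := by positivity
      rw [mul_div_assoc'] -- (d * ε) / (d+1)
      rw [div_le_iff₀ hpos]
      nlinarith [hε]
    rw [hψW]
    linarith
end

section
/- (Weak duality) Let φ: [0,∞) → ℝ be convex and superlinear with Legendre transform ψ, let ε > 0, H, Q_0,…,Q_M Hermitian operators, q ∈ ℝ^{M+1}. Then for every positive semidefinite Hermitian π with Tr[Q_i π] = q_i for all i, and every α ∈ ℝ^{M+1}, one has Tr[Hπ] + ε Tr[φ(π)] ≥ Σ_i α_i q_i − ε Tr[ψ((Σ_i α_i Q_i − H)/ε)]. -/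
open scoped ComplexOrder

open Matrix Filter Topology

/-- Lower bound for a convex function on `[0,c]`. -/
lemma convex_lb (φ : ℝ → ℝ) (hconv : ConvexOn ℝ (Set.Ici 0) φ) {c x : ℝ} (hc : 0 < c)
    (hx : 0 ≤ x) (hxc : x ≤ c) :
    -(2 * (|φ c| + |φ (2*c)|)) ≤ φ x := by
  set lam : ℝ := c / (2*c - x) with hlam
  have h1 : 0 < 2*c - x := by linarith
  have hl0 : 0 < lam := div_pos hc h1
  have hl1 : lam ≤ 1 := by rw [hlam, div_le_one h1]; linarith
  have hl2 : 1/2 ≤ lam := by rw [hlam, le_div_iff₀ h1]; linarith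
  have hcomb : lam • x + (1 - lam) • (2*c) = c := by
    simp only [smul_eq_mul, hlam]; field_simp [(by linarith : (0:ℝ) < c * 2 - x).ne']; ring
  have h2 := hconv.2 (Set.mem_Ici.2 hx) (Set.mem_Ici.2 (by linarith : (0:ℝ) ≤ 2*c))
    (le_of_lt hl0) (by linarith : (0:ℝ) ≤ 1 - lam) (by ring)
  rw [hcomb] at h2
  simp only [smul_eq_mul] at h2
  have ha := neg_abs_le (φ c)
  have hb := le_abs_self (φ (2*c))
  have hc2 := abs_nonneg (φ c)
  have hd := abs_nonneg (φ (2*c))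
  nlinarith [mul_le_mul_of_nonneg_left hb (by linarith : (0:ℝ) ≤ 1 - lam)]

lemma fenchel_young (φ : ℝ → ℝ) (hconv : ConvexOn ℝ (Set.Ici 0) φ)
    (hsl : Tendsto (fun t => φ t / t) atTop atTop) (t x : ℝ) (hx : 0 ≤ x) :
    t * x ≤ legendre φ t + φ x := by
  have h : t * x - φ x ≤ legendre φ t := by
    refine le_csSup ?_ ⟨x, hx, rfl⟩
    obtain ⟨N, hN⟩ := Filter.eventually_atTop.mp (hsl.eventually_ge_atTop t)
    set c : ℝ := max N 1 with hcdef
    have hc1 : (1:ℝ) ≤ c := le_max_right _ _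
    have hc0 : (0:ℝ) < c := by linarith
    refine ⟨max (|t| * c + 2 * (|φ c| + |φ (2*c)|)) 0, ?_⟩
    rintro y ⟨z, hz, rfl⟩
    simp only [Set.mem_Ici] at hz
    by_cases hzc : z ≤ c
    · refine le_trans ?_ (le_max_left _ _)
      have h1 : t * z ≤ |t| * c := by
        calc t * z ≤ |t| * z := mul_le_mul_of_nonneg_right (le_abs_self t) hz
        _ ≤ |t| * c := mul_le_mul_of_nonneg_left hzc (abs_nonneg t)
      have h2 := convex_lb φ hconv hc0 hz hzc
      simp only []
      linarith
    · refine le_trans ?_ (le_max_right _ _)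
      push_neg at hzc
      have hz0 : (0:ℝ) < z := lt_trans hc0 hzc
      have hN' := hN z (le_trans (le_max_left N 1) hzc.le)
      rw [le_div_iff₀ hz0] at hN'
      simp only []
      linarith
  linarith

open scoped ComplexOrder in
lemma trace_fenchel {d : ℕ} (φ ψ : ℝ → ℝ)
    (hfy : ∀ t x : ℝ, 0 ≤ x → t * x ≤ ψ t + φ x)
    (A B : Matrix (Fin d) (Fin d) ℂ) (hA : A.IsHermitian) (hB : B.PosSemidef) :
    (Matrix.trace (A * B)).re ≤ (∑ j, ψ (hA.eigenvalues j)) + ∑ k, φ (hB.1.eigenvalues k) := by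
  classical
  set V : Matrix (Fin d) (Fin d) ℂ := (hA.eigenvectorUnitary : Matrix (Fin d) (Fin d) ℂ) with hV
  set U : Matrix (Fin d) (Fin d) ℂ := (hB.1.eigenvectorUnitary : Matrix (Fin d) (Fin d) ℂ) with hU
  set W : Matrix (Fin d) (Fin d) ℂ := star V * U with hW
  have hWmem : W ∈ Matrix.unitaryGroup (Fin d) ℂ := by
    exact Submonoid.mul_mem _ (Unitary.star_mem hA.eigenvectorUnitary.2) hB.1.eigenvectorUnitary.2
  set a : Fin d → ℝ := hA.eigenvalues with ha
  set p : Fin d → ℝ := hB.1.eigenvalues with hp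
  set c : Fin d → Fin d → ℝ := fun j k => Complex.normSq (W j k) with hcdef
  have hrow : ∀ j, ∑ k, c j k = 1 := by
    intro j
    have h1 := Matrix.mem_unitaryGroup_iff.mp hWmem
    have h2 : (W * star W) j j = 1 := by rw [h1]; simp
    rw [Matrix.mul_apply] at h2
    have : ((∑ k, c j k : ℝ) : ℂ) = 1 := by
      push_cast
      rw [← h2]
      refine Finset.sum_congr rfl fun k _ => ?_
      simp [hcdef, Matrix.star_apply, Complex.mul_conj]
    exact_mod_cast this
  have hcol : ∀ k, ∑ j, c j k = 1 := by
    intro k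
    have h1 := Matrix.mem_unitaryGroup_iff'.mp hWmem
    have h2 : (star W * W) k k = 1 := by rw [h1]; simp
    rw [Matrix.mul_apply] at h2
    have : ((∑ j, c j k : ℝ) : ℂ) = 1 := by
      push_cast
      rw [← h2]
      refine Finset.sum_congr rfl fun j _ => ?_
      simp [hcdef, Matrix.star_apply, mul_comm, Complex.mul_conj]
    exact_mod_cast this
  have hkey : Matrix.trace (A * B) =
      ((∑ j, ∑ k, a j * p k * c j k : ℝ) : ℂ) := by
    set X : Matrix (Fin d) (Fin d) ℂ :=
      Matrix.diagonal (RCLike.ofReal ∘ a) * W * Matrix.diagonal (RCLike.ofReal ∘ p) * star W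
      with hX
    have e0 : A * B = V * (Matrix.diagonal (RCLike.ofReal ∘ a) * star V *
        (U * (Matrix.diagonal (RCLike.ofReal ∘ p) * star U))) := by
      conv_lhs => rw [hA.spectral_theorem, hB.1.spectral_theorem]
      simp only [Unitary.conjStarAlgAut_apply, Matrix.mul_assoc, hV, hU, ha, hp]
    have htr : Matrix.trace (A * B) = Matrix.trace X := by
      rw [e0, Matrix.trace_mul_comm, hX, hW]
      refine congrArg Matrix.trace ?_
      simp only [Matrix.star_mul, star_star, Matrix.mul_assoc]
    rw [htr, Matrix.trace]
    push_cast
    refine Finset.sum_congr rfl fun j _ => ?_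
    rw [hX, Matrix.diag_apply, Matrix.mul_apply]
    refine Finset.sum_congr rfl fun k _ => ?_
    rw [Matrix.mul_diagonal, Matrix.diagonal_mul, Matrix.star_apply]
    have : W j k * star (W j k) = (Complex.normSq (W j k) : ℂ) := by
      rw [← Complex.mul_conj]; rfl
    calc (RCLike.ofReal ∘ a) j * W j k * (RCLike.ofReal ∘ p) k * star (W j k)
        = (RCLike.ofReal ∘ a) j * (RCLike.ofReal ∘ p) k * (W j k * star (W j k)) := by ring
      _ = (a j : ℂ) * (p k : ℂ) * (Complex.normSq (W j k) : ℂ) := by rw [this]; rfl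
      _ = _ := by rw [hcdef]
  rw [hkey, Complex.ofReal_re]
  calc ∑ j, ∑ k, a j * p k * c j k
      ≤ ∑ j, ∑ k, (ψ (a j) + φ (p k)) * c j k := by
        refine Finset.sum_le_sum fun j _ => Finset.sum_le_sum fun k _ => ?_
        have h1 : a j * p k ≤ ψ (a j) + φ (p k) :=
          hfy (a j) (p k) (hB.eigenvalues_nonneg k)
        have h2 : 0 ≤ c j k := Complex.normSq_nonneg _
        nlinarith
    _ = (∑ j, ψ (a j)) + ∑ k, φ (p k) := by
        simp only [add_mul, Finset.sum_add_distrib]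
        congr 1
        · exact Finset.sum_congr rfl fun j _ => by rw [← Finset.mul_sum, hrow, mul_one]
        · rw [Finset.sum_comm]
          exact Finset.sum_congr rfl fun k _ => by rw [← Finset.mul_sum, hcol, mul_one]

/-- Weak duality: for every admissible `π` and every `α ∈ ℝ^{M+1}`,
`Tr[Hπ] + ε Tr[φ(π)] ≥ ∑ α_i q_i − ε Tr[ψ((∑ α_i Q_i − H)/ε)]` with `ψ = φ*`. -/
theorem stmt8 {d M : ℕ} (φ : ℝ → ℝ) (hconv : ConvexOn ℝ (Set.Ici 0) φ)
    (hsl : Tendsto (fun t => φ t / t) atTop atTop)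
    (ε : ℝ) (hε : 0 < ε)
    (H : Matrix (Fin d) (Fin d) ℂ) (hH : H.IsHermitian)
    (Q : Fin (M + 1) → Matrix (Fin d) (Fin d) ℂ) (hQ : ∀ i, (Q i).IsHermitian)
    (q : Fin (M + 1) → ℝ)
    (π : Matrix (Fin d) (Fin d) ℂ) (hπ : π.PosSemidef)
    (hadm : ∀ i, Matrix.trace (Q i * π) = (q i : ℂ))
    (α : Fin (M + 1) → ℝ) :
    (∑ i, α i * q i) -
        ε * traceFun (legendre φ) (ε⁻¹ • (∑ i, α i • Q i - H)) ≤
      (Matrix.trace (H * π)).re + ε * traceFun φ π := by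
  classical
  set S : Matrix (Fin d) (Fin d) ℂ := ∑ i, α i • Q i with hSdef
  set A : Matrix (Fin d) (Fin d) ℂ := ε⁻¹ • (S - H) with hAdef
  have hS : S.IsHermitian := by
    show Sᴴ = S
    rw [hSdef, Matrix.conjTranspose_sum]
    exact Finset.sum_congr rfl fun i _ => by
      rw [Matrix.conjTranspose_smul, star_trivial, (hQ i).eq]
  have hA : A.IsHermitian := by
    show Aᴴ = A
    rw [hAdef, Matrix.conjTranspose_smul, star_trivial, (hS.sub hH).eq]
  rw [traceFun, dif_pos hA, traceFun, dif_pos hπ.1]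
  have h1 : ε • A = S - H := by
    rw [hAdef, smul_smul, mul_inv_cancel₀ hε.ne', one_smul]
  have hc : ((∑ i, α i * q i : ℝ) : ℂ) = ε • Matrix.trace (A * π) + Matrix.trace (H * π) := by
    calc ((∑ i, α i * q i : ℝ) : ℂ) = ∑ i, (α i : ℂ) * (q i : ℂ) := by push_cast; rfl
      _ = ∑ i, (α i : ℂ) * Matrix.trace (Q i * π) :=
          Finset.sum_congr rfl fun i _ => by rw [hadm i]
      _ = Matrix.trace (S * π) := by
          rw [hSdef, Matrix.sum_mul, Matrix.trace_sum]
          exact Finset.sum_congr rfl fun i _ => by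
            rw [Matrix.smul_mul, Matrix.trace_smul, Complex.real_smul]
      _ = Matrix.trace ((ε • A + H) * π) := by rw [h1, sub_add_cancel]
      _ = ε • Matrix.trace (A * π) + Matrix.trace (H * π) := by
          rw [Matrix.add_mul, Matrix.trace_add, Matrix.smul_mul, Matrix.trace_smul]
  have hre : ∑ i, α i * q i = ε * (Matrix.trace (A * π)).re + (Matrix.trace (H * π)).re := by
    have h2 := congrArg Complex.re hc
    simpa [Complex.real_smul, Complex.add_re, Complex.mul_re] using h2
  have hmain := trace_fenchel φ (legendre φ) (fenchel_young φ hconv hsl) A π hA hπ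
  nlinarith [mul_le_mul_of_nonneg_left hmain hε.le]
end
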